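/- Let n, m ∈ ℤ_+ with 2(m+1) ≤ n and let I be a nonempty independent set of C_n^m. If |I| ≥ 2, then γ_gr(C_n^m, I) = n − |I|·m; if |I| = 1, then γ_gr(C_n^m, I) = n − 2m. -/

import Mathlib

namespace GrundyDom

/-- Closed neighborhood N[v]. -/
def cn {V : Type*} (G : SimpleGraph V) (v : V) : Set V := insert v (G.neighborSet v)

/-- Union of closed neighborhoods of the vertices of a list. -/
def cnUnion {V : Type*} (G : SimpleGraph V) (L : List V) : Set V := ⋃ v ∈ L, cn G v

/-- Private neighborhood of `v` with respect to the first `i` entries of `S`: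
`N[v] \ (N[v_1] ∪ ... ∪ N[v_i])`. -/
def PN {V : Type*} (G : SimpleGraph V) (S : List V) (i : ℕ) (v : V) : Set V :=
  cn G v \ cnUnion G (S.take i)

/-- A legal dominating sequence: distinct vertices, dominating set, and every
vertex of the sequence has a nonempty private neighborhood w.r.t. its predecessors. -/
structure IsLegal {V : Type*} (G : SimpleGraph V) (S : List V) : Prop where
  nodup : S.Nodup
  dominates : ∀ v : V, ∃ u ∈ S, v ∈ cn G u
  legal : ∀ i : Fin S.length, (PN G S i.val (S.get i)).Nonempty

/-- The set `I_S` of vertices that footprint themselves in `S`. -/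
def selfFoot {V : Type*} (G : SimpleGraph V) (S : List V) : Set V :=
  {v | ∃ i : Fin S.length, S.get i = v ∧ v ∈ PN G S i.val v}

/-- Grundy domination number: maximum length of a legal dominating sequence. -/
noncomputable def gammaGr {V : Type*} (G : SimpleGraph V) : ℕ :=
  sSup {k | ∃ S : List V, IsLegal G S ∧ S.length = k}

/-- `γ_gr(G, I)`: maximum length of a legal dominating sequence `S` with `I_S = I`. -/
noncomputable def gammaGrOn {V : Type*} (G : SimpleGraph V) (I : Set V) : ℕ :=
  sSup {k | ∃ S : List V, IsLegal G S ∧ selfFoot G S = I ∧ S.length = k}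

/-- `γ_gr^u(G)`: maximum of `γ_gr(G, I)` over independent sets `I` containing `u`. -/
noncomputable def gammaGrVert {V : Type*} (G : SimpleGraph V) (u : V) : ℕ :=
  sSup {k | ∃ I : Set V, (∀ ⦃a⦄, a ∈ I → ∀ ⦃b⦄, b ∈ I → a ≠ b → ¬ G.Adj a b) ∧
    u ∈ I ∧ k = gammaGrOn G I}

/-- Independent set of a graph. -/
def IsIndep {V : Type*} (G : SimpleGraph V) (I : Set V) : Prop :=
  ∀ ⦃u⦄, u ∈ I → ∀ ⦃v⦄, v ∈ I → u ≠ v → ¬ G.Adj u v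

/-- The X-join product `G ↩ 𝓡`: replace each vertex `v` of `G` by the graph `R v`. -/
def XJoin {V : Type*} (G : SimpleGraph V) {W : V → Type*} (R : ∀ v, SimpleGraph (W v)) :
    SimpleGraph (Σ v, W v) where
  Adj x y := G.Adj x.1 y.1 ∨ ∃ h : x.1 = y.1, (R y.1).Adj (h ▸ x.2) y.2
  symm := ⟨by
    rintro ⟨a, xa⟩ ⟨b, yb⟩ (h | ⟨h, hadj⟩)
    · exact Or.inl h.symm
    · dsimp at h hadj
      subst h
      exact Or.inr ⟨rfl, (R a).adj_symm hadj⟩⟩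
  loopless := ⟨by
    rintro ⟨a, xa⟩ (h | ⟨h, hadj⟩)
    · exact G.irrefl h
    · exact (R a).irrefl hadj⟩

/-- The lexicographic product `G ∘ H`. -/
def Lex {V W : Type*} (G : SimpleGraph V) (H : SimpleGraph W) : SimpleGraph (V × W) where
  Adj x y := G.Adj x.1 y.1 ∨ (x.1 = y.1 ∧ H.Adj x.2 y.2)
  symm := ⟨by
    rintro x y (h | ⟨h1, h2⟩)
    · exact Or.inl h.symm
    · exact Or.inr ⟨h1.symm, h2.symm⟩⟩
  loopless := ⟨by
    rintro x (h | ⟨_, h⟩)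
    · exact G.irrefl h
    · exact H.irrefl h⟩

/-- The replacement graph `G_{u ↩ H}`: replace the vertex `u` of `G` by `H`. -/
def Replace {V : Type*} (G : SimpleGraph V) (u : V) {W : Type*} (H : SimpleGraph W) :
    SimpleGraph ({v : V // v ≠ u} ⊕ W) where
  Adj x y :=
    match x, y with
    | Sum.inl a, Sum.inl b => G.Adj a.1 b.1
    | Sum.inl a, Sum.inr _ => G.Adj a.1 u
    | Sum.inr _, Sum.inl b => G.Adj u b.1
    | Sum.inr h1, Sum.inr h2 => H.Adj h1 h2
  symm := ⟨by rintro (a|a) (b|b) h <;> exact h.symm⟩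
  loopless := ⟨by rintro (a|a) h <;> exact h.ne rfl⟩

/-- `C_n^m`: the m-th power of the n-cycle, on vertex set `ZMod n`;
two vertices are adjacent iff their circular distance is between 1 and m. -/
def cyclePow (n m : ℕ) : SimpleGraph (ZMod n) where
  Adj i j := i ≠ j ∧ ∃ k : ℕ, 1 ≤ k ∧ k ≤ m ∧ (j = i + k ∨ i = j + k)
  symm := ⟨by
    rintro i j ⟨hne, k, h1, h2, h3⟩
    exact ⟨hne.symm, k, h1, h2, h3.symm⟩⟩
  loopless := ⟨fun i h => h.1 rfl⟩

/-- `P_n^m`: the m-th power of the n-path, on vertex set `Fin n`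
(vertex `i` represents the `(i+1)`-st vertex of the path);
two vertices adjacent iff their distance is between 1 and m. -/
def pathPow (n m : ℕ) : SimpleGraph (Fin n) where
  Adj i j := i ≠ j ∧ Nat.dist i.val j.val ≤ m
  symm := ⟨by
    rintro i j ⟨hne, hd⟩
    exact ⟨hne.symm, by rwa [Nat.dist_comm]⟩⟩
  loopless := ⟨fun i h => h.1 rfl⟩

end GrundyDom

open GrundyDom Finset

section
variable {n m : ℕ} [NeZero n]

def intv (c : ZMod n) (l : ℕ) : Finset (ZMod n) := (Finset.range l).image (fun j : ℕ => c + (j : ZMod n))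

lemma mem_intv_of (c : ZMod n) {l : ℕ} {x : ZMod n} (h : (x - c).val < l) : x ∈ intv c l := by
  refine Finset.mem_image.2 ⟨(x - c).val, Finset.mem_range.2 h, ?_⟩
  rw [ZMod.natCast_val, ZMod.cast_id]; ring

lemma mem_intv {c : ZMod n} {l : ℕ} (hl : l ≤ n) {x : ZMod n} :
    x ∈ intv c l ↔ (x - c).val < l := by
  constructor
  · rintro hx
    obtain ⟨j, hj, rfl⟩ := Finset.mem_image.1 hx
    rw [Finset.mem_range] at hj
    rw [add_sub_cancel_left, ZMod.val_natCast_of_lt (lt_of_lt_of_le hj hl)]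
    exact hj
  · exact mem_intv_of c

lemma card_intv (c : ZMod n) {l : ℕ} (hl : l ≤ n) : (intv c l).card = l := by
  rw [intv, Finset.card_image_of_injOn, Finset.card_range]
  intro a ha b hb hab
  simp only [Finset.coe_range, Set.mem_Iio] at ha hb
  have := add_left_cancel hab
  have ha' : (a : ZMod n).val = a := ZMod.val_natCast_of_lt (lt_of_lt_of_le ha hl)
  have hb' : (b : ZMod n).val = b := ZMod.val_natCast_of_lt (lt_of_lt_of_le hb hl)
  rw [← ha', ← hb', this]

omit [NeZero n] in
lemma intv_zero (c : ZMod n) : intv c 0 = ∅ := by simp [intv]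

lemma intv_univ (c : ZMod n) : intv c n = Finset.univ := by
  ext x
  simp only [Finset.mem_univ, iff_true]
  exact mem_intv_of c (ZMod.val_lt _)

lemma val_sub_cast {s : ℕ} (a : ZMod n) (hs : s ≤ n) :
    (a - (s : ℕ)).val = if s ≤ a.val then a.val - s else a.val + n - s := by
  split_ifs with h
  · have : a - (s : ℕ) = ((a.val - s : ℕ) : ZMod n) := by
      rw [Nat.cast_sub h, ZMod.natCast_val, ZMod.cast_id]
    rw [this, ZMod.val_natCast_of_lt (by have := ZMod.val_lt a; omega)]
  · have : a - (s : ℕ) = ((a.val + n - s : ℕ) : ZMod n) := by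
      rw [Nat.cast_sub (by omega)]
      push_cast
      rw [ZMod.natCast_self, ZMod.natCast_val, ZMod.cast_id]
      ring
    rw [this, ZMod.val_natCast_of_lt (by have := ZMod.val_lt a; omega)]

/-- union with a right-extending interval -/
lemma union_intv_right {c : ZMod n} {l s M : ℕ} (h1 : s ≤ l) (h2 : l ≤ s + M)
    (h3 : s + M ≤ n) : intv c l ∪ intv (c + (s : ℕ)) M = intv c (s + M) := by
  ext x
  have hj := ZMod.val_lt (x - c)
  rw [Finset.mem_union, mem_intv (by omega), mem_intv (by omega), mem_intv (by omega)]
  have : x - (c + (s : ℕ)) = (x - c) - (s : ℕ) := by ring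
  rw [this, val_sub_cast _ (by omega)]
  split_ifs with h <;> omega

/-- union with a left-extending ball covering one new vertex on the left -/
lemma union_intv_left {c : ZMod n} {M l : ℕ} (h0 : 0 < M) (h1 : M ≤ l + 1)
    (h2 : l + 1 ≤ n) : intv c M ∪ intv (c + ((1 : ℕ) : ZMod n)) l = intv c (l + 1) := by
  ext x
  have hj := ZMod.val_lt (x - c)
  rw [Finset.mem_union, mem_intv (by omega), mem_intv (by omega), mem_intv (by omega)]
  have : x - (c + (1 : ℕ)) = (x - c) - (1 : ℕ) := by ring
  rw [this, val_sub_cast _ (by omega)]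
  split_ifs with h <;> omega

/-- closing the circle: interval of size n-1 together with any set containing
the missing vertex -/
lemma union_intv_last {x : ZMod n} {B : Finset (ZMod n)} (hx : x ∈ B) :
    intv (x + ((1:ℕ) : ZMod n)) (n - 1) ∪ B = Finset.univ := by
  ext y
  simp only [Finset.mem_univ, iff_true, Finset.mem_union]
  by_cases hyx : y = x
  · exact Or.inr (hyx ▸ hx)
  · left
    apply mem_intv_of
    have h1 : y - (x + ((1:ℕ):ZMod n)) = (y - x) - ((1 : ℕ):ZMod n) := by ring
    have h2 : (y - x).val ≠ 0 := by
      intro h0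
      exact hyx (by rwa [ZMod.val_eq_zero, sub_eq_zero] at h0)
    have h3 := ZMod.val_lt (y - x)
    rw [h1, val_sub_cast _ (by omega)]
    have hn := Nat.pos_of_ne_zero (NeZero.ne n)
    split_ifs with h <;> omega

def bll (m : ℕ) (v : ZMod n) : Finset (ZMod n) := intv (v - (m : ℕ)) (2 * m + 1)

lemma bll_shift {c : ZMod n} {s : ℕ} (h : m ≤ s) :
    bll m (c + ((s:ℕ) : ZMod n)) = intv (c + ((s - m : ℕ) : ZMod n)) (2*m+1) := by
  rw [bll]
  congr 1
  rw [Nat.cast_sub h]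
  ring

lemma mem_ball_self (hmn : 2 * m + 1 ≤ n) (v : ZMod n) : v ∈ bll m v := by
  apply mem_intv_of
  have : v - (v - (m:ℕ)) = ((m:ℕ) : ZMod n) := by ring
  rw [this, ZMod.val_natCast_of_lt (by omega)]
  omega

lemma ball_endpoint (hmn : 2 * m + 1 ≤ n) {v x : ZMod n} (hx : x ∈ bll m v)
    (hx1 : x + 1 ∉ bll m v) : x = v + (m : ℕ) := by
  rw [bll, mem_intv (by omega)] at hx
  set j := (x - (v - (m:ℕ))).val with hj
  have hxe : x = v - (m:ℕ) + (j : ℕ) := by rw [hj, ZMod.natCast_val, ZMod.cast_id]; ring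
  by_cases h2m : j = 2 * m
  · rw [hxe, h2m]; push_cast; ring
  · exfalso
    apply hx1
    apply mem_intv_of
    have : x + 1 - (v - (m:ℕ)) = ((j + 1 : ℕ) : ZMod n) := by rw [hxe]; push_cast; ring
    rw [this, ZMod.val_natCast_of_lt (by omega)]
    omega
end
section
variable {n m : ℕ} [NeZero n]

def covR (m : ℕ) : Finset (ZMod n) → List (ZMod n) → Finset (ZMod n)
  | U, [] => U
  | U, v :: L => covR m (U ∪ bll m v) L

def legalR (m : ℕ) : Finset (ZMod n) → List (ZMod n) → Prop
  | _, [] => True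
  | U, v :: L => (bll m v \ U).Nonempty ∧ legalR m (U ∪ bll m v) L

def footsR (m : ℕ) : Finset (ZMod n) → List (ZMod n) → Finset (ZMod n)
  | _, [] => ∅
  | U, v :: L => (if v ∈ U then ∅ else {v}) ∪ footsR m (U ∪ bll m v) L

lemma covR_append (U : Finset (ZMod n)) (A B : List (ZMod n)) :
    covR m U (A ++ B) = covR m (covR m U A) B := by
  induction A generalizing U with
  | nil => rfl
  | cons v L ih => simp only [List.cons_append, covR, List.append_eq, ih]

lemma legalR_append {U : Finset (ZMod n)} {A B : List (ZMod n)} :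
    legalR m U (A ++ B) ↔ legalR m U A ∧ legalR m (covR m U A) B := by
  induction A generalizing U with
  | nil => simp [legalR, covR]
  | cons v L ih => simp only [List.cons_append, legalR, covR, List.append_eq, ih, and_assoc]

lemma footsR_append (U : Finset (ZMod n)) (A B : List (ZMod n)) :
    footsR m U (A ++ B) = footsR m U A ∪ footsR m (covR m U A) B := by
  induction A generalizing U with
  | nil => simp [footsR, covR]
  | cons v L ih => simp only [List.cons_append, footsR, covR, List.append_eq, ih, Finset.union_assoc]

lemma subset_covR (U : Finset (ZMod n)) (L : List (ZMod n)) : U ⊆ covR m U L := by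
  induction L generalizing U with
  | nil => exact subset_rfl
  | cons v L ih => exact (Finset.subset_union_left).trans (ih _)

lemma mem_covR_of_mem {U : Finset (ZMod n)} {L : List (ZMod n)} {v : ZMod n}
    (hv : v ∈ L) : bll m v ⊆ covR m U L := by
  induction L generalizing U with
  | nil => simp at hv
  | cons w L ih =>
    rcases List.mem_cons.1 hv with rfl | hv
    · exact (Finset.subset_union_right).trans (subset_covR _ _)
    · exact ih hv

lemma legalR_not_subset {U : Finset (ZMod n)} {L : List (ZMod n)} (hL : legalR m U L)
    {v : ZMod n} (hv : v ∈ L) : ¬ bll m v ⊆ U := by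
  induction L generalizing U with
  | nil => simp at hv
  | cons w L ih =>
    rcases List.mem_cons.1 hv with rfl | hv
    · obtain ⟨x, hx⟩ := hL.1
      intro hsub
      rw [Finset.mem_sdiff] at hx
      exact hx.2 (hsub hx.1)
    · intro hsub
      exact ih hL.2 hv (hsub.trans Finset.subset_union_left)

lemma legalR_nodup {U : Finset (ZMod n)} {L : List (ZMod n)} (hL : legalR m U L) :
    L.Nodup := by
  induction L generalizing U with
  | nil => exact List.nodup_nil
  | cons v L ih =>
    refine List.nodup_cons.2 ⟨fun hv => ?_, ih hL.2⟩
    exact legalR_not_subset hL.2 hv Finset.subset_union_right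

lemma legalR_iff_get {U : Finset (ZMod n)} {L : List (ZMod n)} :
    legalR m U L ↔ ∀ i : Fin L.length, (bll m (L.get i) \ covR m U (L.take i.val)).Nonempty := by
  induction L generalizing U with
  | nil => simp [legalR]
  | cons v L ih =>
    constructor
    · rintro ⟨h1, h2⟩ i
      rcases Fin.eq_zero_or_eq_succ i with rfl | ⟨j, rfl⟩
      · simpa [covR, List.take] using h1
      · simpa [covR, List.take_succ_cons] using (ih.1 h2) j
    · intro h
      refine ⟨by simpa [covR, List.take] using h ⟨0, by simp⟩, ih.2 fun j => ?_⟩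
      simpa [covR, List.take_succ_cons] using h j.succ

lemma footsR_eq_set {U : Finset (ZMod n)} {L : List (ZMod n)} :
    {v | ∃ i : Fin L.length, L.get i = v ∧ v ∉ covR m U (L.take i.val)}
      = (footsR m U L : Set (ZMod n)) := by
  induction L generalizing U with
  | nil => simp [footsR]
  | cons w L ih =>
    ext v
    simp only [Set.mem_setOf_eq, footsR, Finset.coe_union, Set.mem_union]
    constructor
    · rintro ⟨i, rfl, hni⟩
      rcases Fin.eq_zero_or_eq_succ i with rfl | ⟨j, rfl⟩
      · left
        simp only [List.get_eq_getElem, Fin.val_zero, List.getElem_cons_zero] at hni ⊢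
        simp only [covR, List.take_zero, Finset.coe_empty] at hni
        simp [hni]
      · right
        rw [← ih]
        exact ⟨j, rfl, by simpa [covR, List.take_succ_cons] using hni⟩
    · rintro (hv | hv)
      · by_cases hw : w ∈ U
        · simp [hw] at hv
        · simp only [hw, if_neg, not_false_iff, Finset.coe_singleton,
            Set.mem_singleton_iff] at hv
          refine ⟨⟨0, by simp⟩, by simp [List.get, hv.symm], ?_⟩
          simp only [List.take_zero, covR, Finset.coe_empty]
          rw [hv]
          simpa using hw
      · rw [← ih] at hv
        obtain ⟨j, hj, hnj⟩ := hv
        exact ⟨j.succ, hj, by simpa [covR, List.take_succ_cons] using hnj⟩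
end
section
variable {n m : ℕ} [NeZero n]

lemma cast_ne_zero_of_val {k : ℕ} (h1 : 0 < k) (h2 : k < n) : ((k : ℕ) : ZMod n) ≠ 0 := by
  intro h0
  have := congrArg ZMod.val h0
  rw [ZMod.val_natCast_of_lt h2, ZMod.val_zero] at this
  omega

lemma cn_eq (hmn : 2*m+1 ≤ n) (v : ZMod n) :
    cn (cyclePow n m) v = (bll m v : Set (ZMod n)) := by
  ext u
  simp only [cn, Set.mem_insert_iff, SimpleGraph.mem_neighborSet, cyclePow, Finset.mem_coe]
  constructor
  · rintro (rfl | ⟨hne, k, h1, hk, (rfl | he)⟩)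
    · exact mem_ball_self (by omega) u
    · apply mem_intv_of
      have : v + (k:ℕ) - (v - (m:ℕ)) = ((m + k : ℕ) : ZMod n) := by push_cast; ring
      rw [this, ZMod.val_natCast_of_lt (by omega)]
      omega
    · apply mem_intv_of
      have : u - (v - (m:ℕ)) = ((m - k : ℕ) : ZMod n) := by
        rw [he]; push_cast [Nat.cast_sub hk]; ring
      rw [this, ZMod.val_natCast_of_lt (by omega)]
      omega
  · intro hu
    rw [bll, mem_intv (by omega)] at hu
    set j := (u - (v - (m:ℕ))).val with hj
    have hue : u = v - (m:ℕ) + (j:ℕ) := by rw [hj, ZMod.natCast_val, ZMod.cast_id]; ring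
    rcases lt_trichotomy j m with hlt | heq | hgt
    · right
      have hne : ((m - j : ℕ) : ZMod n) ≠ 0 := cast_ne_zero_of_val (by omega) (by omega)
      refine ⟨?_, m - j, by omega, by omega, Or.inr ?_⟩
      · intro h
        apply hne
        have : v - u = ((m - j : ℕ) : ZMod n) := by
          rw [hue]; push_cast [Nat.cast_sub (by omega : j ≤ m)]; ring
        rw [← this, h, sub_self]
      · rw [hue]; push_cast [Nat.cast_sub (by omega : j ≤ m)]; ring
    · left
      rw [hue, heq]
      push_cast
      ring
    · right
      have hne : ((j - m : ℕ) : ZMod n) ≠ 0 := cast_ne_zero_of_val (by omega) (by omega)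
      refine ⟨?_, j - m, by omega, by omega, Or.inl ?_⟩
      · intro h
        apply hne
        have : u - v = ((j - m : ℕ) : ZMod n) := by
          rw [hue]; push_cast [Nat.cast_sub (by omega : m ≤ j)]; ring
        rw [← this, ← h, sub_self]
      · rw [hue]; push_cast [Nat.cast_sub (by omega : m ≤ j)]; ring

lemma cnUnion_cons (G : SimpleGraph (ZMod n)) (v : ZMod n) (L : List (ZMod n)) :
    cnUnion G (v :: L) = cn G v ∪ cnUnion G L := by
  ext y
  simp only [cnUnion, Set.mem_iUnion, Set.mem_union, List.mem_cons, exists_prop]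
  constructor
  · rintro ⟨u, (rfl | hu), hy⟩
    · exact Or.inl hy
    · exact Or.inr ⟨u, hu, hy⟩
  · rintro (hy | ⟨u, hu, hy⟩)
    · exact ⟨v, Or.inl rfl, hy⟩
    · exact ⟨u, Or.inr hu, hy⟩

lemma covR_coe (hmn : 2*m+1 ≤ n) (U : Finset (ZMod n)) (L : List (ZMod n)) :
    (covR m U L : Set (ZMod n)) = ↑U ∪ cnUnion (cyclePow n m) L := by
  induction L generalizing U with
  | nil => simp [covR, cnUnion]
  | cons v L ih =>
    rw [covR, ih, cnUnion_cons, cn_eq hmn, Finset.coe_union]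
    rw [Set.union_assoc]

lemma covR_coe' (hmn : 2*m+1 ≤ n) (L : List (ZMod n)) :
    (covR m ∅ L : Set (ZMod n)) = cnUnion (cyclePow n m) L := by
  rw [covR_coe hmn]; simp

lemma isLegal_iff (hmn : 2*m+1 ≤ n) (S : List (ZMod n)) :
    IsLegal (cyclePow n m) S ↔ (legalR m ∅ S ∧ covR m ∅ S = Finset.univ) := by
  constructor
  · intro hS
    constructor
    · rw [legalR_iff_get]
      intro i
      have := hS.legal i
      rw [PN, cn_eq hmn] at this
      rw [← Finset.coe_nonempty, Finset.coe_sdiff, covR_coe' hmn]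
      exact this
    · rw [Finset.eq_univ_iff_forall]
      intro x
      obtain ⟨u, hu, hx⟩ := hS.dominates x
      rw [← Finset.mem_coe, covR_coe' hmn]
      exact Set.mem_biUnion hu hx
  · rintro ⟨h1, h2⟩
    refine ⟨legalR_nodup h1, ?_, ?_⟩
    · intro x
      have : x ∈ (covR m ∅ S : Set (ZMod n)) := by rw [h2]; simp
      rw [covR_coe' hmn] at this
      simpa only [cnUnion, Set.mem_iUnion, exists_prop] using this
    · intro i
      have := (legalR_iff_get.1 h1) i
      rw [← Finset.coe_nonempty, Finset.coe_sdiff] at this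
      rwa [PN, cn_eq hmn, ← covR_coe' hmn]

lemma selfFoot_eq (hmn : 2*m+1 ≤ n) (S : List (ZMod n)) :
    selfFoot (cyclePow n m) S = (footsR m ∅ S : Set (ZMod n)) := by
  rw [← footsR_eq_set]
  ext v
  simp only [selfFoot, Set.mem_setOf_eq]
  refine exists_congr fun i => and_congr_right fun hi => ?_
  rw [PN, Set.mem_diff, ← covR_coe' hmn]
  simp only [Finset.mem_coe]
  constructor
  · exact fun h => h.2
  · intro h
    exact ⟨Set.mem_insert _ _, h⟩
end
section
variable {n m : ℕ} [NeZero n]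

def Ecnt (U : Finset (ZMod n)) : ℕ := (U.filter (fun x => x + 1 ∉ U)).card

def Phi (m : ℕ) (U : Finset (ZMod n)) : ℤ := (U.card : ℤ) - m * Ecnt U

lemma Ecnt_univ : Ecnt (Finset.univ : Finset (ZMod n)) = 0 := by
  rw [Ecnt, Finset.card_eq_zero, Finset.filter_eq_empty_iff]
  intro x _
  simp

lemma cast_inj_of_lt {a b : ℕ} (ha : a < n) (hb : b < n) (h : ((a:ℕ):ZMod n) = ((b:ℕ):ZMod n)) :
    a = b := by
  have := congrArg ZMod.val h
  rwa [ZMod.val_natCast_of_lt ha, ZMod.val_natCast_of_lt hb] at this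

lemma exists_endpoint {U : Finset (ZMod n)} {x y : ZMod n} (hx : x ∈ U) (hy : y ∉ U) :
    0 < Ecnt U := by
  rw [Ecnt, Finset.card_pos]
  by_contra hne
  rw [Finset.not_nonempty_iff_eq_empty, Finset.filter_eq_empty_iff] at hne
  have hall : ∀ k : ℕ, x + (k : ZMod n) ∈ U := by
    intro k
    induction k with
    | zero => simpa using hx
    | succ k ih =>
      have := not_not.1 (hne ih)
      push_cast
      rwa [← add_assoc]
  apply hy
  have := hall (y - x).val
  rwa [ZMod.natCast_val, ZMod.cast_id, add_sub_cancel] at this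

lemma card_ge_of_range {D : Finset (ZMod n)} {c : ZMod n} {i j : ℕ} (hj : j < n)
    (h : ∀ l, i ≤ l → l ≤ j → c + ((l:ℕ) : ZMod n) ∈ D) : j + 1 - i ≤ D.card := by
  have hsub : (Finset.Icc i j).image (fun l : ℕ => c + ((l:ℕ) : ZMod n)) ⊆ D := by
    intro x hx
    obtain ⟨l, hl, rfl⟩ := Finset.mem_image.1 hx
    rw [Finset.mem_Icc] at hl
    exact h l hl.1 hl.2
  have hcard : ((Finset.Icc i j).image (fun l : ℕ => c + ((l:ℕ) : ZMod n))).card = j + 1 - i := by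
    rw [Finset.card_image_of_injOn, Nat.card_Icc]
    intro a ha b hb hab
    rw [Finset.coe_Icc, Set.mem_Icc] at ha hb
    exact cast_inj_of_lt (by omega) (by omega) (add_left_cancel hab)
  calc j + 1 - i = _ := hcard.symm
    _ ≤ D.card := Finset.card_le_card hsub

lemma Ecnt_union_bound (hmn : 2*m+2 ≤ n) (v : ZMod n) (U : Finset (ZMod n)) :
    Ecnt (U ∪ bll m v) + (U.filter (fun x => x + 1 ∈ bll m v \ U)).card
      ≤ Ecnt U + (if v + ((m:ℕ) : ZMod n) ∈ U then 0 else 1) := by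
  classical
  set W := U ∪ bll m v with hW
  set WE := W.filter (fun x => x + 1 ∉ W) with hWE
  set UE := U.filter (fun x => x + 1 ∉ U) with hUE
  set K := U.filter (fun x => x + 1 ∈ bll m v \ U) with hK
  have hdisj : Disjoint WE K := by
    rw [Finset.disjoint_left]
    intro x hxW hxK
    rw [hWE, Finset.mem_filter] at hxW
    rw [hK, Finset.mem_filter, Finset.mem_sdiff] at hxK
    exact hxW.2 (Finset.mem_union_right _ hxK.2.1)
  have hWEK : WE ∪ K ⊆ UE ∪ {v + ((m:ℕ) : ZMod n)} := by
    intro x hx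
    rcases Finset.mem_union.1 hx with hx | hx
    · rw [hWE, Finset.mem_filter] at hx
      obtain ⟨hxW, hx1⟩ := hx
      have hx1U : x + 1 ∉ U := fun h => hx1 (Finset.mem_union_left _ h)
      have hx1B : x + 1 ∉ bll m v := fun h => hx1 (Finset.mem_union_right _ h)
      rcases Finset.mem_union.1 hxW with hxU | hxB
      · exact Finset.mem_union_left _ (Finset.mem_filter.2 ⟨hxU, hx1U⟩)
      · have := ball_endpoint (by omega) hxB hx1B
        exact Finset.mem_union_right _ (by simp [this])
    · rw [hK, Finset.mem_filter, Finset.mem_sdiff] at hx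
      exact Finset.mem_union_left _ (Finset.mem_filter.2 ⟨hx.1, hx.2.2⟩)
  have hcard := Finset.card_le_card hWEK
  rw [Finset.card_union_of_disjoint hdisj] at hcard
  have hEW : Ecnt W = WE.card := by rw [Ecnt, hWE]
  have hEU : Ecnt U = UE.card := by rw [Ecnt, hUE]
  split_ifs with hvm
  · -- v + m ∈ U : the singleton case never happens
    have hWEK' : WE ∪ K ⊆ UE := by
      intro x hx
      rcases Finset.mem_union.1 hx with hx | hx
      · rw [hWE, Finset.mem_filter] at hx
        obtain ⟨hxW, hx1⟩ := hx
        have hx1U : x + 1 ∉ U := fun h => hx1 (Finset.mem_union_left _ h)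
        have hx1B : x + 1 ∉ bll m v := fun h => hx1 (Finset.mem_union_right _ h)
        rcases Finset.mem_union.1 hxW with hxU | hxB
        · exact Finset.mem_filter.2 ⟨hxU, hx1U⟩
        · have := ball_endpoint (by omega) hxB hx1B
          subst this
          exact Finset.mem_filter.2 ⟨hvm, hx1U⟩
      · rw [hK, Finset.mem_filter, Finset.mem_sdiff] at hx
        exact Finset.mem_filter.2 ⟨hx.1, hx.2.2⟩
    have := Finset.card_le_card hWEK'
    rw [Finset.card_union_of_disjoint hdisj] at this
    omega
  · have hle : (UE ∪ {v + ((m:ℕ):ZMod n)}).card ≤ UE.card + 1 := by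
      calc (UE ∪ {v + ((m:ℕ):ZMod n)}).card
          ≤ UE.card + ({v + ((m:ℕ):ZMod n)} : Finset (ZMod n)).card := Finset.card_union_le _ _
        _ = UE.card + 1 := by simp
    omega
end
section
variable {n m : ℕ} [NeZero n]

lemma chainD (hmn : 2*m+2 ≤ n) {v : ZMod n} {U : Finset (ZMod n)} :
    ∀ j, j < 2*m+1 → (v - ((m:ℕ):ZMod n) + ((j:ℕ):ZMod n)) ∈ bll m v \ U →
      ∃ i, i ≤ j ∧ (∀ l, i ≤ l → l ≤ j → (v - ((m:ℕ):ZMod n) + ((l:ℕ):ZMod n)) ∈ bll m v \ U) ∧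
        (i = 0 ∨ (1 ≤ i ∧ (v - ((m:ℕ):ZMod n) + (((i-1:ℕ)):ZMod n))
            ∈ U.filter (fun x => x + 1 ∈ bll m v \ U))) := by
  intro j
  induction j with
  | zero =>
    intro _ h0
    refine ⟨0, le_refl 0, fun l hl1 hl2 => ?_, Or.inl rfl⟩
    have : l = 0 := by omega
    subst this
    exact h0
  | succ j ih =>
    intro hj hmem
    by_cases hU : (v - ((m:ℕ):ZMod n) + ((j:ℕ):ZMod n)) ∈ U
    · refine ⟨j+1, le_refl _, ?_, Or.inr ⟨by omega, ?_⟩⟩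
      · intro l h1 h2
        have : l = j+1 := by omega
        subst this
        exact hmem
      · simp only [Nat.add_sub_cancel]
        refine Finset.mem_filter.2 ⟨hU, ?_⟩
        have heq : (v - ((m:ℕ):ZMod n) + ((j:ℕ):ZMod n)) + 1
            = v - ((m:ℕ):ZMod n) + (((j+1:ℕ)):ZMod n) := by push_cast; ring
        rw [heq]
        exact hmem
    · have hballj : (v - ((m:ℕ):ZMod n) + ((j:ℕ):ZMod n)) ∈ bll m v := by
        apply mem_intv_of
        rw [add_sub_cancel_left, ZMod.val_natCast_of_lt (by omega)]
        omega
      obtain ⟨i, hi, hint, hw⟩ := ih (by omega) (Finset.mem_sdiff.2 ⟨hballj, hU⟩)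
      refine ⟨i, by omega, ?_, hw⟩
      intro l h1 h2
      rcases Nat.lt_or_ge l (j+1) with h | h
      · exact hint l h1 (by omega)
      · have : l = j+1 := by omega
        subst this
        exact hmem

lemma vm_mem_D (hmn : 2*m+2 ≤ n) {v : ZMod n} {U : Finset (ZMod n)}
    (h : v + ((m:ℕ):ZMod n) ∉ U) : v + ((m:ℕ):ZMod n) ∈ bll m v \ U := by
  refine Finset.mem_sdiff.2 ⟨?_, h⟩
  apply mem_intv_of
  have heq : v + ((m:ℕ):ZMod n) - (v - ((m:ℕ):ZMod n)) = (((2*m:ℕ)):ZMod n) := by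
    push_cast; ring
  rw [heq, ZMod.val_natCast_of_lt (by omega)]
  omega

lemma off_m (v : ZMod n) : v - ((m:ℕ):ZMod n) + ((m:ℕ):ZMod n) = v := sub_add_cancel v _

lemma off_2m (v : ZMod n) : v - ((m:ℕ):ZMod n) + (((2*m:ℕ)):ZMod n) = v + ((m:ℕ):ZMod n) := by
  push_cast; ring

lemma phi_union_eq {v : ZMod n} (U : Finset (ZMod n)) :
    Phi m (U ∪ bll m v) = (U.card : ℤ) + ((bll m v \ U).card : ℤ) - m * Ecnt (U ∪ bll m v) := by
  rw [Phi, ← Finset.union_sdiff_self_eq_union,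
    Finset.card_union_of_disjoint Finset.disjoint_sdiff]
  push_cast
  ring

lemma stepB (hm : 1 ≤ m) (hmn : 2*m+2 ≤ n) {v : ZMod n} {U : Finset (ZMod n)} (hv : v ∉ U) :
    Phi m (U ∪ bll m v) ≥ Phi m U + (m + 1) := by
  classical
  have hEb := Ecnt_union_bound hmn v U
  set W := U ∪ bll m v with hWdef
  set D := bll m v \ U with hDdef
  set K := U.filter (fun x => x + 1 ∈ bll m v \ U) with hKdef
  have hvD : v ∈ D := Finset.mem_sdiff.2 ⟨mem_ball_self (by omega) v, hv⟩
  have hDpos : 1 ≤ D.card := Finset.card_pos.2 ⟨v, hvD⟩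
  have hphiW := phi_union_eq (m := m) (v := v) U
  rw [← hWdef, ← hDdef] at hphiW
  rw [hphiW, Phi]
  by_cases hvm : v + ((m:ℕ):ZMod n) ∈ U
  · rw [if_pos hvm] at hEb
    by_cases hK : K.card = 0
    · -- no kill: [v-m, v] ⊆ D
      have hKempty : K = ∅ := Finset.card_eq_zero.1 hK
      obtain ⟨i, hi, hint, hw⟩ := chainD hmn m (by omega) (by rw [off_m]; exact hvD)
      have hi0 : i = 0 := by
        rcases hw with h | ⟨_, h⟩
        · exact h
        · rw [← hKdef, hKempty] at h
          simp at h
      subst hi0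
      have hcard : m + 1 - 0 ≤ D.card :=
        card_ge_of_range (c := v - ((m:ℕ):ZMod n)) (by omega) (fun l h1 h2 => hint l h1 h2)
      have h1 : (Ecnt W : ℤ) ≤ (Ecnt U : ℤ) := by
        have : Ecnt W + K.card ≤ Ecnt U := by omega
        exact_mod_cast le_trans (Nat.le_add_right _ _) this
      have h2 : (m:ℤ) * Ecnt W ≤ (m:ℤ) * Ecnt U :=
        mul_le_mul_of_nonneg_left h1 (by positivity)
      have h3 : (m + 1 : ℤ) ≤ D.card := by exact_mod_cast hcard
      linarith
    · -- some kill
      have hK1 : 1 ≤ K.card := by omega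
      have h1 : (Ecnt W : ℤ) + 1 ≤ (Ecnt U : ℤ) := by exact_mod_cast by omega
      have h2 : (m:ℤ) * (Ecnt W + 1) ≤ (m:ℤ) * Ecnt U :=
        mul_le_mul_of_nonneg_left h1 (by positivity)
      have h3 : (1 : ℤ) ≤ D.card := by exact_mod_cast hDpos
      have hm' : (1:ℤ) ≤ (m:ℤ) := by exact_mod_cast hm
      nlinarith
  · rw [if_neg hvm] at hEb
    have hvmD : v + ((m:ℕ):ZMod n) ∈ D := vm_mem_D hmn hvm
    rcases Nat.lt_or_ge K.card 1 with hK | hK1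
    · -- K = 0 : entire ball is new
      have hKempty : K = ∅ := Finset.card_eq_zero.1 (by omega)
      obtain ⟨i, hi, hint, hw⟩ := chainD hmn (2*m) (by omega) (by rw [off_2m]; exact hvmD)
      have hi0 : i = 0 := by
        rcases hw with h | ⟨_, h⟩
        · exact h
        · rw [← hKdef, hKempty] at h
          simp at h
      subst hi0
      have hcard : 2*m + 1 - 0 ≤ D.card :=
        card_ge_of_range (c := v - ((m:ℕ):ZMod n)) (by omega) (fun l h1 h2 => hint l h1 h2)
      have h1 : (Ecnt W : ℤ) ≤ (Ecnt U : ℤ) + 1 := by exact_mod_cast by omega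
      have h2 : (m:ℤ) * Ecnt W ≤ (m:ℤ) * (Ecnt U + 1) :=
        mul_le_mul_of_nonneg_left h1 (by positivity)
      have h3 : (2*m + 1 : ℤ) ≤ D.card := by exact_mod_cast hcard
      linarith
    · rcases Nat.lt_or_ge K.card 2 with hK2 | hK2
      · -- K.card = 1
        have hKone : K.card = 1 := by omega
        obtain ⟨x0, hx0⟩ := Finset.card_eq_one.1 hKone
        obtain ⟨i1, hi1, hint1, hw1⟩ := chainD hmn m (by omega) (by rw [off_m]; exact hvD)
        have hD_ge : m + 1 ≤ D.card := by
          rcases hw1 with h | ⟨hi1pos, hx1⟩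
          · subst h
            have h5 : m + 1 - 0 ≤ D.card :=
              card_ge_of_range (c := v - ((m:ℕ):ZMod n)) (by omega) (fun l ha hb => hint1 l ha hb)
            omega
          · obtain ⟨i2, hi2, hint2, hw2⟩ := chainD hmn (2*m) (by omega) (by rw [off_2m]; exact hvmD)
            rcases hw2 with h | ⟨hi2pos, hx2⟩
            · subst h
              have h5 : 2*m + 1 - 0 ≤ D.card :=
                card_ge_of_range (c := v - ((m:ℕ):ZMod n)) (by omega) (fun l ha hb => hint2 l ha hb)
              omega
            · rw [← hKdef, hx0, Finset.mem_singleton] at hx1 hx2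
              have heq : i1 - 1 = i2 - 1 := by
                have h6 : i1 - 1 < n := by omega
                have h7 : i2 - 1 < n := by omega
                exact cast_inj_of_lt h6 h7 (add_left_cancel (hx1.trans hx2.symm))
              have hii : i1 = i2 := by omega
              have h5 : 2*m + 1 - i2 ≤ D.card :=
                card_ge_of_range (c := v - ((m:ℕ):ZMod n)) (by omega) (fun l ha hb => hint2 l ha hb)
              omega
        have h1 : (Ecnt W : ℤ) ≤ (Ecnt U : ℤ) := by exact_mod_cast by omega
        have h2 : (m:ℤ) * Ecnt W ≤ (m:ℤ) * Ecnt U :=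
          mul_le_mul_of_nonneg_left h1 (by positivity)
        have h3 : (m + 1 : ℤ) ≤ D.card := by exact_mod_cast hD_ge
        linarith
      · -- K.card ≥ 2
        have h1 : (Ecnt W : ℤ) + 1 ≤ (Ecnt U : ℤ) := by exact_mod_cast by omega
        have h2 : (m:ℤ) * (Ecnt W + 1) ≤ (m:ℤ) * Ecnt U :=
          mul_le_mul_of_nonneg_left h1 (by positivity)
        have h3 : (1 : ℤ) ≤ D.card := by exact_mod_cast hDpos
        have hm' : (1:ℤ) ≤ (m:ℤ) := by exact_mod_cast hm
        nlinarith

lemma stepA (hm : 1 ≤ m) (hmn : 2*m+2 ≤ n) {v : ZMod n} {U : Finset (ZMod n)} (hv : v ∈ U)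
    (hne : (bll m v \ U).Nonempty) :
    Phi m (U ∪ bll m v) ≥ Phi m U + 1 := by
  classical
  have hEb := Ecnt_union_bound hmn v U
  set W := U ∪ bll m v with hWdef
  set D := bll m v \ U with hDdef
  set K := U.filter (fun x => x + 1 ∈ bll m v \ U) with hKdef
  have hDpos : 1 ≤ D.card := Finset.card_pos.2 hne
  have hphiW := phi_union_eq (m := m) (v := v) U
  rw [← hWdef, ← hDdef] at hphiW
  rw [hphiW, Phi]
  by_cases hvm : v + ((m:ℕ):ZMod n) ∈ U
  · rw [if_pos hvm] at hEb
    have h1 : (Ecnt W : ℤ) ≤ (Ecnt U : ℤ) := by exact_mod_cast by omega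
    have h2 : (m:ℤ) * Ecnt W ≤ (m:ℤ) * Ecnt U :=
      mul_le_mul_of_nonneg_left h1 (by positivity)
    have h3 : (1 : ℤ) ≤ D.card := by exact_mod_cast hDpos
    linarith
  · rw [if_neg hvm] at hEb
    have hvmD : v + ((m:ℕ):ZMod n) ∈ D := vm_mem_D hmn hvm
    have hK1 : 1 ≤ K.card := by
      obtain ⟨i, hi, hint, hw⟩ := chainD hmn (2*m) (by omega) (by rw [off_2m]; exact hvmD)
      rcases hw with h | ⟨_, hx⟩
      · exfalso
        subst h
        have hvD : v ∈ D := by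
          have := hint m (by omega) (by omega)
          rwa [off_m] at this
        exact (Finset.mem_sdiff.1 hvD).2 hv
      · exact Finset.card_pos.2 ⟨_, hx⟩
    have h1 : (Ecnt W : ℤ) ≤ (Ecnt U : ℤ) := by exact_mod_cast by omega
    have h2 : (m:ℤ) * Ecnt W ≤ (m:ℤ) * Ecnt U :=
      mul_le_mul_of_nonneg_left h1 (by positivity)
    have h3 : (1 : ℤ) ≤ D.card := by exact_mod_cast hDpos
    linarith

lemma stepC (hm : 1 ≤ m) (hmn : 2*m+2 ≤ n) {v : ZMod n} {U : Finset (ZMod n)} (hv : v ∈ U)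
    (hne : (bll m v \ U).Nonempty) (huniv : U ∪ bll m v = Finset.univ) :
    Phi m (U ∪ bll m v) ≥ Phi m U + (m + 1) := by
  classical
  obtain ⟨y, hy⟩ := hne
  have hyD := Finset.mem_sdiff.1 hy
  have hE : 1 ≤ Ecnt U := exists_endpoint hv hyD.2
  have hD : 1 ≤ (bll m v \ U).card := Finset.card_pos.2 ⟨y, hy⟩
  have hphiW := phi_union_eq (m := m) (v := v) U
  rw [hphiW, huniv, Ecnt_univ, Phi]
  simp only [Nat.cast_zero, mul_zero]
  have hcardU : U.card + (bll m v \ U).card = n := by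
    have : (U ∪ bll m v).card = n := by
      rw [huniv, Finset.card_univ, ZMod.card]
    rw [← Finset.union_sdiff_self_eq_union, Finset.card_union_of_disjoint Finset.disjoint_sdiff]
      at this
    exact this
  have h1 : (1:ℤ) ≤ Ecnt U := by exact_mod_cast hE
  have h2 : (m:ℤ) * 1 ≤ (m:ℤ) * Ecnt U := mul_le_mul_of_nonneg_left h1 (by positivity)
  have h3 : (1:ℤ) ≤ ((bll m v \ U).card : ℤ) := by exact_mod_cast hD
  have h4 : (U.card : ℤ) + ((bll m v \ U).card : ℤ) = n := by exact_mod_cast hcardU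
  linarith
end
section
variable {n m : ℕ} [NeZero n]

lemma Phi_empty : Phi m (∅ : Finset (ZMod n)) = 0 := by
  simp [Phi, Ecnt]

lemma Phi_univ : Phi m (Finset.univ : Finset (ZMod n)) = n := by
  rw [Phi, Ecnt_univ, Finset.card_univ, ZMod.card]
  simp

lemma upper_main (hm : 1 ≤ m) (hmn : 2*m+2 ≤ n) :
    ∀ (S : List (ZMod n)) (U : Finset (ZMod n)), legalR m U S →
      Phi m (covR m U S) ≥ Phi m U + S.length + m * (footsR m U S).card := by
  intro S
  induction S with
  | nil =>
    intro U _
    simp [covR, footsR]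
  | cons v L ih =>
    intro U hU
    obtain ⟨h1, h2⟩ := hU
    have hrec := ih (U ∪ bll m v) h2
    by_cases hvU : v ∈ U
    · have hfoot : footsR m U (v :: L) = footsR m (U ∪ bll m v) L := by
        rw [footsR, if_pos hvU, Finset.empty_union]
      have hstep := stepA hm hmn hvU h1
      rw [covR] at *
      rw [hfoot]
      simp only [List.length_cons]
      push_cast
      linarith
    · have hfoot : ((footsR m U (v :: L)).card : ℤ)
          ≤ 1 + ((footsR m (U ∪ bll m v) L).card : ℤ) := by
        rw [footsR, if_neg hvU]
        have := Finset.card_union_le ({v} : Finset (ZMod n)) (footsR m (U ∪ bll m v) L)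
        rw [Finset.card_singleton] at this
        exact_mod_cast this
      have hstep := stepB hm hmn hvU
      have hmul : (m:ℤ) * ((footsR m U (v :: L)).card : ℤ)
          ≤ (m:ℤ) * (1 + ((footsR m (U ∪ bll m v) L).card : ℤ)) :=
        mul_le_mul_of_nonneg_left hfoot (by positivity)
      rw [covR] at *
      simp only [List.length_cons]
      push_cast
      nlinarith [hrec, hstep, hmul]

lemma upper_bound_length (hm : 1 ≤ m) (hmn : 2*m+2 ≤ n) {S : List (ZMod n)}
    (hleg : legalR m ∅ S) (hcov : covR m ∅ S = Finset.univ) :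
    (S.length : ℤ) + m * (footsR m ∅ S).card ≤ n := by
  have h := upper_main hm hmn S ∅ hleg
  rw [hcov, Phi_univ, Phi_empty] at h
  linarith

lemma upper_bound_one (hm : 1 ≤ m) (hmn : 2*m+2 ≤ n) {S : List (ZMod n)}
    (hleg : legalR m ∅ S) (hcov : covR m ∅ S = Finset.univ)
    (hfoot : (footsR m ∅ S).card = 1) :
    (S.length : ℤ) + 2 * m ≤ n := by
  rcases List.eq_nil_or_concat S with rfl | ⟨A, z, rfl⟩
  · exfalso
    have : (Finset.univ : Finset (ZMod n)).card = n := by rw [Finset.card_univ, ZMod.card]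
    rw [← hcov] at this
    simp [covR] at this
    omega
  · rw [List.concat_eq_append] at hleg hcov hfoot ⊢
    rw [legalR_append] at hleg
    obtain ⟨hA, hz⟩ := hleg
    rw [covR_append] at hcov
    set UA := covR m ∅ A with hUA
    have hzne : (bll m z \ UA).Nonempty := hz.1
    have hcovz : UA ∪ bll m z = Finset.univ := by
      simpa [covR] using hcov
    rcases A with _ | ⟨v, A'⟩
    · exfalso
      have hcard : (Finset.univ : Finset (ZMod n)).card = n := by
        rw [Finset.card_univ, ZMod.card]
      rw [← hcovz] at hcard
      have : UA = ∅ := by simp [hUA, covR]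
      rw [this, Finset.empty_union, bll, card_intv _ (by omega)] at hcard
      omega
    · have hvF : v ∈ footsR m ∅ ((v :: A') ++ [z]) := by
        rw [footsR_append]
        apply Finset.mem_union_left
        rw [footsR]
        simp
      by_cases hzU : z ∈ UA
      · -- final step lands on covered vertex: stepC
        have hstepC := stepC hm hmn hzU hzne hcovz
        have hmainA := upper_main hm hmn (v :: A') ∅ hA
        have hFA : 1 ≤ ((footsR m ∅ (v :: A')).card : ℤ) := by
          have : v ∈ footsR m ∅ (v :: A') := by rw [footsR]; simp
          exact_mod_cast Finset.card_pos.2 ⟨v, this⟩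
        have hmul : (m:ℤ) * 1 ≤ (m:ℤ) * ((footsR m ∅ (v :: A')).card : ℤ) :=
          mul_le_mul_of_nonneg_left hFA (by positivity)
        rw [Phi_empty] at hmainA
        rw [hcovz, Phi_univ] at hstepC
        have hm' : (1:ℤ) ≤ (m:ℤ) := by exact_mod_cast hm
        have hlen : (((v :: A') ++ [z]).length : ℤ) = (v :: A').length + 1 := by
          simp
        rw [hlen]
        rw [← hUA] at hmainA
        linarith
      · -- impossible: two self-footprinting vertices
        exfalso
        have hzF : z ∈ footsR m ∅ ((v :: A') ++ [z]) := by
          rw [footsR_append, ← hUA]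
          apply Finset.mem_union_right
          rw [footsR, if_neg hzU]
          simp [footsR]
        have hvz : v ≠ z := by
          have hnd := legalR_nodup (by rw [legalR_append]; exact ⟨hA, hz⟩ :
            legalR m ∅ ((v :: A') ++ [z]))
          simp only [List.cons_append, List.nodup_cons, List.mem_append,
            List.mem_singleton] at hnd
          exact fun h => hnd.1 (Or.inr h)
        have hsub : ({v, z} : Finset (ZMod n)) ⊆ footsR m ∅ ((v :: A') ++ [z]) := by
          intro x hx
          rcases Finset.mem_insert.1 hx with rfl | hx
          · exact hvF
          · rw [Finset.mem_singleton] at hx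
            subst hx
            exact hzF
        have := Finset.card_le_card hsub
        rw [Finset.card_pair hvz, hfoot] at this
        omega
end
section
variable {n m : ℕ} [NeZero n]

lemma sdiff_nonempty_of_card_lt {A B : Finset (ZMod n)} (h : A.card < (A ∪ B).card) :
    (B \ A).Nonempty := by
  rw [Finset.nonempty_iff_ne_empty]
  intro he
  rw [Finset.sdiff_eq_empty_iff_subset] at he
  rw [Finset.union_eq_left.2 he] at h
  omega

lemma fwd_run (hm : 1 ≤ m) :
    ∀ (b a ℓ : ℕ) (c : ZMod n), m ≤ a → a ≤ ℓ + m → ℓ ≤ a + m → a + b + m ≤ n → 1 ≤ b →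
    legalR m (intv c ℓ) ((List.range b).map (fun k => c + ((a + k : ℕ) : ZMod n)))
    ∧ covR m (intv c ℓ) ((List.range b).map (fun k => c + ((a + k : ℕ) : ZMod n)))
        = intv c (a + b + m)
    ∧ footsR m (intv c ℓ) ((List.range b).map (fun k => c + ((a + k : ℕ) : ZMod n)))
        = (if a < ℓ then ∅ else {c + ((a:ℕ):ZMod n)}) := by
  intro b
  induction b with
  | zero => omega
  | succ b' ih =>
    intro a ℓ c ham haℓ hℓa hn _
    -- first play
    set p := c + ((a:ℕ):ZMod n) with hp
    have hball : bll m p = intv (c + ((a - m : ℕ):ZMod n)) (2*m+1) := bll_shift ham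
    have hunion : intv c ℓ ∪ bll m p = intv c (a + m + 1) := by
      rw [hball]
      have := union_intv_right (c := c) (l := ℓ) (s := a - m) (M := 2*m+1)
        (by omega) (by omega) (by omega)
      rw [this]
      congr 1
      omega
    have hcards : (intv c ℓ).card < (intv c ℓ ∪ bll m p).card := by
      rw [hunion, card_intv _ (by omega), card_intv _ (by omega)]
      omega
    have hlegal_head : (bll m p \ intv c ℓ).Nonempty := sdiff_nonempty_of_card_lt hcards
    have hmem_p : p ∈ intv c ℓ ↔ a < ℓ := by
      rw [hp, mem_intv (by omega), add_sub_cancel_left, ZMod.val_natCast_of_lt (by omega)]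
    have hLeq : (List.range (b'+1)).map (fun k => c + ((a + k : ℕ) : ZMod n))
        = p :: (List.range b').map (fun k => c + ((a + 1 + k : ℕ) : ZMod n)) := by
      rw [List.range_succ_eq_map, List.map_cons, List.map_map]
      refine congrArg₂ _ (by rw [hp]; norm_num) ?_
      apply List.map_congr_left
      intro k _
      simp only [Function.comp_apply]
      push_cast
      ring
    rw [hLeq]
    rcases Nat.eq_zero_or_pos b' with rfl | hb'
    · -- single play
      refine ⟨⟨?_, trivial⟩, ?_, ?_⟩
      · exact hlegal_head
      · simp only [List.range_zero, List.map_nil, covR, hunion]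
        congr 1
        omega
      · simp only [List.range_zero, List.map_nil, footsR, Finset.union_empty]
        by_cases h : a < ℓ
        · rw [if_pos (hmem_p.2 h), if_pos h]
        · rw [if_neg (fun hc => h (hmem_p.1 hc)), if_neg h]
    · obtain ⟨ihl, ihc, ihf⟩ := ih (a+1) (a + m + 1) c (by omega) (by omega) (by omega)
        (by omega) hb'
      refine ⟨⟨hlegal_head, ?_⟩, ?_, ?_⟩
      · rw [hunion]
        exact ihl
      · simp only [covR]
        rw [hunion, ihc]
        congr 1
        omega
      · simp only [footsR]
        rw [hunion, ihf, if_pos (by omega : a + 1 < a + m + 1), Finset.union_empty]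
        by_cases h : a < ℓ
        · rw [if_pos (hmem_p.2 h), if_pos h]
        · rw [if_neg (fun hc => h (hmem_p.1 hc)), if_neg h]
end
section
variable {n m : ℕ} [NeZero n]

lemma construct_one (hm : 1 ≤ m) (hmn : 2*m+2 ≤ n) (w : ZMod n) :
    ∃ S : List (ZMod n), legalR m ∅ S ∧ covR m ∅ S = Finset.univ ∧
      footsR m ∅ S = {w} ∧ S.length = n - 2*m := by
  set c := w - ((m:ℕ):ZMod n) with hc
  obtain ⟨hl, hcov, hf⟩ := fwd_run hm (n - 2*m) m 0 c (le_refl m) (by omega) (by omega)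
    (by omega) (by omega)
  rw [intv_zero] at hl hcov hf
  refine ⟨_, hl, ?_, ?_, by simp⟩
  · rw [hcov]
    have he : m + (n - 2*m) + m = n := by omega
    rw [he, intv_univ]
  · rw [hf, if_neg (by omega)]
    congr 1
    rw [hc]
    exact sub_add_cancel w _

lemma bwd_run (hm : 1 ≤ m) :
    ∀ (b ℓ : ℕ) (c : ZMod n), 2*m+1 ≤ ℓ → ℓ + b ≤ n →
    legalR m (intv c ℓ)
        ((List.range b).map (fun j => c - (((j+1 : ℕ)):ZMod n) + ((m:ℕ):ZMod n)))
    ∧ covR m (intv c ℓ)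
        ((List.range b).map (fun j => c - (((j+1 : ℕ)):ZMod n) + ((m:ℕ):ZMod n)))
        = intv (c - ((b:ℕ):ZMod n)) (ℓ + b)
    ∧ footsR m (intv c ℓ)
        ((List.range b).map (fun j => c - (((j+1 : ℕ)):ZMod n) + ((m:ℕ):ZMod n))) = ∅ := by
  intro b
  induction b with
  | zero =>
    intro ℓ c _ _
    refine ⟨trivial, ?_, rfl⟩
    simp only [List.range_zero, List.map_nil, covR]
    norm_num
  | succ b' ih =>
    intro ℓ c hℓ hn
    set p := c - (((1:ℕ)):ZMod n) + ((m:ℕ):ZMod n) with hp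
    have hball : bll m p = intv (c - (((1:ℕ)):ZMod n)) (2*m+1) := by
      rw [bll]
      congr 1
      rw [hp]
      ring
    have hcc : (c - (((1:ℕ)):ZMod n)) + (((1:ℕ)):ZMod n) = c := by ring
    have hunion : intv c ℓ ∪ bll m p = intv (c - (((1:ℕ)):ZMod n)) (ℓ + 1) := by
      rw [hball, Finset.union_comm]
      have hu := union_intv_left (n := n) (c := c - (((1:ℕ)):ZMod n)) (M := 2*m+1) (l := ℓ)
        (by omega) (by omega) (by omega)
      rwa [hcc] at hu
    have hpmem : p ∈ intv c ℓ := by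
      rw [mem_intv (by omega)]
      have he : p - c = (((m - 1:ℕ)):ZMod n) := by
        rw [hp, Nat.cast_sub hm]
        push_cast
        ring
      rw [he, ZMod.val_natCast_of_lt (by omega)]
      omega
    have hlegal_head : (bll m p \ intv c ℓ).Nonempty := by
      apply sdiff_nonempty_of_card_lt
      rw [hunion, card_intv _ (by omega), card_intv _ (by omega)]
      omega
    have hLeq : (List.range (b'+1)).map (fun j => c - (((j+1 : ℕ)):ZMod n) + ((m:ℕ):ZMod n))
        = p :: (List.range b').map
            (fun j => (c - (((1:ℕ)):ZMod n)) - (((j+1 : ℕ)):ZMod n) + ((m:ℕ):ZMod n)) := by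
      rw [List.range_succ_eq_map, List.map_cons, List.map_map]
      refine congrArg₂ _ rfl ?_
      apply List.map_congr_left
      intro k _
      simp only [Function.comp_apply]
      push_cast
      ring
    rw [hLeq]
    obtain ⟨ihl, ihc, ihf⟩ := ih (ℓ+1) (c - (((1:ℕ)):ZMod n)) (by omega) (by omega)
    refine ⟨⟨hlegal_head, ?_⟩, ?_, ?_⟩
    · rw [hunion]
      exact ihl
    · simp only [covR]
      rw [hunion, ihc]
      congr 1
      · push_cast
        ring
      · omega
    · simp only [footsR]
      rw [hunion, ihf, if_pos hpmem]
      simp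

lemma last_run (hm : 1 ≤ m) (hmn : 2*m+2 ≤ n) (wt : ZMod n) :
    legalR m (intv (wt + ((1:ℕ):ZMod n)) (n-1)) [wt]
    ∧ covR m (intv (wt + ((1:ℕ):ZMod n)) (n-1)) [wt] = Finset.univ
    ∧ footsR m (intv (wt + ((1:ℕ):ZMod n)) (n-1)) [wt] = {wt} := by
  have hmem : wt ∉ intv (wt + ((1:ℕ):ZMod n)) (n-1) := by
    rw [mem_intv (by omega)]
    have he : wt - (wt + ((1:ℕ):ZMod n)) = (((n-1:ℕ)):ZMod n) := by
      rw [Nat.cast_sub (by omega : 1 ≤ n)]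
      push_cast
      rw [ZMod.natCast_self]
      ring
    rw [he, ZMod.val_natCast_of_lt (by omega)]
    omega
  refine ⟨⟨Finset.nonempty_of_ne_empty ?_, trivial⟩, ?_, ?_⟩
  · intro he
    have := mem_ball_self (m := m) (by omega) wt
    have h2 : wt ∈ bll m wt \ intv (wt + ((1:ℕ):ZMod n)) (n-1) :=
      Finset.mem_sdiff.2 ⟨this, hmem⟩
    rw [he] at h2
    simp at h2
  · simp only [covR]
    exact union_intv_last (mem_ball_self (by omega) wt)
  · simp only [footsR, if_neg hmem]
    simp

def fwdL (m : ℕ) (c : ZMod n) : ℕ → List ℕ → List (ZMod n)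
  | _, [] => []
  | x, y :: rest =>
    ((List.range (y - x - m)).map (fun k => c + ((m + x + k : ℕ) : ZMod n))) ++ fwdL m c y rest

lemma chain_le_getLastD : ∀ (zs : List ℕ) (x : ℕ),
    List.Chain (fun a b => a + m + 1 ≤ b) x zs → x ≤ zs.getLastD x := by
  intro zs
  induction zs with
  | nil => intro x _; simp
  | cons y rest ih =>
    intro x hch
    rw [List.Chain, List.chain_cons] at hch
    have := ih y hch.2
    simp only [List.getLastD_cons]
    omega

lemma getLast_cons_eq_getLastD : ∀ (zs : List ℕ) (x : ℕ),
    (x :: zs).getLast (List.cons_ne_nil _ _) = zs.getLastD x := by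
  intro zs
  induction zs with
  | nil => intro x; simp
  | cons y rest ih =>
    intro x
    rw [List.getLast_cons (List.cons_ne_nil _ _), ih y, List.getLastD_cons]

lemma fwdL_spec (hm : 1 ≤ m) (c : ZMod n) :
    ∀ (zs : List ℕ) (x ℓ : ℕ), List.Chain (fun a b => a + m + 1 ≤ b) x zs →
    m + zs.getLastD x ≤ n → (ℓ = m + x ∨ (x = 0 ∧ ℓ = 0 ∧ zs ≠ [])) →
    legalR m (intv c ℓ) (fwdL m c x zs)
    ∧ covR m (intv c ℓ) (fwdL m c x zs) = intv c (m + zs.getLastD x)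
    ∧ footsR m (intv c ℓ) (fwdL m c x zs)
        = ((x :: zs).dropLast.map (fun z => c + ((m + z : ℕ) : ZMod n))).toFinset
    ∧ (fwdL m c x zs).length + zs.length * m + x = zs.getLastD x := by
  intro zs
  induction zs with
  | nil =>
    intro x ℓ _ _ hH
    rcases hH with rfl | ⟨_, _, hne⟩
    · exact ⟨trivial, rfl, by simp [fwdL, footsR], by simp [fwdL]⟩
    · exact absurd rfl hne
  | cons y rest ih =>
    intro x ℓ hch hlast hH
    rw [List.Chain, List.chain_cons] at hch
    obtain ⟨hxy, hch'⟩ := hch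
    have hylast : y ≤ rest.getLastD y := chain_le_getLastD rest y hch'
    have hlast' : m + rest.getLastD y ≤ n := by
      simpa only [List.getLastD_cons] using hlast
    have hℓx : ℓ ≤ m + x ∧ m + x ≤ ℓ + m := by
      rcases hH with rfl | ⟨rfl, rfl, _⟩ <;> omega
    obtain ⟨hbl, hbc, hbf⟩ := fwd_run hm (y - x - m) (m + x) ℓ c (by omega) (by omega)
      (by omega) (by omega) (by omega)
    have hbc' : covR m (intv c ℓ)
        ((List.range (y - x - m)).map (fun k => c + ((m + x + k : ℕ) : ZMod n)))
        = intv c (m + y) := by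
      rw [hbc]
      congr 1
      omega
    obtain ⟨ihl, ihc, ihf, ihlen⟩ := ih y (m + y) hch' hlast' (Or.inl rfl)
    have hfoot_block : footsR m (intv c ℓ)
        ((List.range (y - x - m)).map (fun k => c + ((m + x + k : ℕ) : ZMod n)))
        = {c + ((m + x : ℕ) : ZMod n)} := by
      rw [hbf, if_neg (by omega)]
    refine ⟨?_, ?_, ?_, ?_⟩
    · rw [fwdL, legalR_append]
      exact ⟨hbl, by rw [hbc']; exact ihl⟩
    · rw [fwdL, covR_append, hbc', ihc]
      simp only [List.getLastD_cons]
    · rw [fwdL, footsR_append, hbc', hfoot_block, ihf]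
      have hdl : (x :: y :: rest).dropLast = x :: (y :: rest).dropLast := by
        simp
      rw [hdl, List.map_cons, List.toFinset_cons]
      rw [Finset.insert_eq]
    · rw [fwdL, List.length_append, List.length_map, List.length_range]
      simp only [List.getLastD_cons, List.length_cons]
      rw [Nat.add_mul, Nat.one_mul]
      omega

lemma construct_many (hm : 1 ≤ m) (hmn : 2*m+2 ≤ n) (w1 : ZMod n) (zs : List ℕ)
    (hzs : zs ≠ []) (hchain : List.Chain (fun a b => a + m + 1 ≤ b) 0 zs)
    (hlast : zs.getLastD 0 + m + 1 ≤ n) :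
    ∃ S : List (ZMod n), legalR m ∅ S ∧ covR m ∅ S = Finset.univ ∧
      footsR m ∅ S = ((0 :: zs).map (fun z => w1 + ((z:ℕ):ZMod n))).toFinset ∧
      S.length + (zs.length + 1) * m = n := by
  set c := w1 - ((m:ℕ):ZMod n) with hc
  set Z := zs.getLastD 0 with hZ
  have hZ1 : m + 1 ≤ Z := by
    rcases zs with _ | ⟨z, rest⟩
    · exact absurd rfl hzs
    · rw [List.Chain, List.chain_cons] at hchain
      have := chain_le_getLastD rest z hchain.2
      simp only [hZ, List.getLastD_cons]
      omega
  obtain ⟨hfl, hfc, hff, hflen⟩ := fwdL_spec hm c zs 0 0 hchain (by omega)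
    (Or.inr ⟨rfl, rfl, hzs⟩)
  rw [intv_zero] at hfl hfc hff
  rw [← hZ] at hfc hflen
  set b := n - Z - m - 1 with hb
  obtain ⟨hbl, hbc, hbf⟩ := bwd_run hm b (m + Z) c (by omega) (by omega)
  set wt := w1 + ((Z:ℕ):ZMod n) with hwt
  have hkey : c - ((b:ℕ):ZMod n) = wt + ((1:ℕ):ZMod n) := by
    have hbe : (b:ℕ) = n - (Z + m + 1) := by omega
    rw [hbe, hc, hwt, Nat.cast_sub (by omega : Z + m + 1 ≤ n)]
    push_cast
    rw [ZMod.natCast_self]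
    ring
  have hbc' : covR m (intv c (m + Z))
      ((List.range b).map (fun j => c - (((j+1 : ℕ)):ZMod n) + ((m:ℕ):ZMod n)))
      = intv (wt + ((1:ℕ):ZMod n)) (n - 1) := by
    rw [hbc, hkey]
    congr 1
    omega
  obtain ⟨hll, hlc, hlf⟩ := last_run hm hmn wt
  have hgf : ∀ z ∈ (0 :: zs).dropLast, c + ((m + z : ℕ) : ZMod n) = w1 + ((z:ℕ):ZMod n) := by
    intro z _
    rw [hc]
    push_cast
    ring
  have hsplit : ((0 :: zs).map (fun z => w1 + ((z:ℕ):ZMod n)))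
      = ((0 :: zs).dropLast.map (fun z => w1 + ((z:ℕ):ZMod n))) ++ [w1 + ((Z:ℕ):ZMod n)] := by
    conv_lhs => rw [← List.dropLast_append_getLast (List.cons_ne_nil 0 zs)]
    rw [List.map_append, getLast_cons_eq_getLastD, ← hZ]
    simp
  refine ⟨fwdL m c 0 zs
      ++ (((List.range b).map (fun j => c - (((j+1 : ℕ)):ZMod n) + ((m:ℕ):ZMod n)))
      ++ [wt]), ?_, ?_, ?_, ?_⟩
  · rw [legalR_append, hfc, legalR_append, hbc']
    exact ⟨hfl, hbl, hll⟩
  · rw [covR_append, hfc, covR_append, hbc']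
    exact hlc
  · rw [footsR_append, hfc, footsR_append, hbc', hff, hbf, hlf, Finset.empty_union]
    rw [hsplit, List.toFinset_append]
    congr 1
    rw [List.map_congr_left hgf]
  · simp only [List.length_append, List.length_map, List.length_range, List.length_cons,
      List.length_nil]
    rw [Nat.add_mul, Nat.one_mul]
    omega
end
section
variable {n m : ℕ} [NeZero n]

lemma indep_gap (hmn : 2*m+2 ≤ n) {I : Finset (ZMod n)}
    (hind : IsIndep (cyclePow n m) (I : Set (ZMod n))) {u u' : ZMod n}
    (hu : u ∈ I) (hu' : u' ∈ I) (hlt : u.val < u'.val) :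
    u.val + m + 1 ≤ u'.val ∧ u'.val + m + 1 ≤ u.val + n := by
  have hne : u ≠ u' := fun h => by rw [h] at hlt; omega
  have hadj := hind (Finset.mem_coe.2 hu) (Finset.mem_coe.2 hu') hne
  have hvu := ZMod.val_lt u
  have hvu' := ZMod.val_lt u'
  constructor
  · by_contra hcon
    apply hadj
    show u ≠ u' ∧ ∃ k : ℕ, 1 ≤ k ∧ k ≤ m ∧ (u' = u + k ∨ u = u' + k)
    refine ⟨hne, u'.val - u.val, by omega, by omega, Or.inl ?_⟩
    rw [Nat.cast_sub (by omega), ZMod.natCast_val, ZMod.natCast_val, ZMod.cast_id,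
      ZMod.cast_id]
    ring
  · by_contra hcon
    apply hadj
    show u ≠ u' ∧ ∃ k : ℕ, 1 ≤ k ∧ k ≤ m ∧ (u' = u + k ∨ u = u' + k)
    refine ⟨hne, u.val + n - u'.val, by omega, by omega, Or.inr ?_⟩
    rw [Nat.cast_sub (by omega), Nat.cast_add, ZMod.natCast_self, ZMod.natCast_val,
      ZMod.natCast_val, ZMod.cast_id, ZMod.cast_id]
    ring

lemma chain_of_pairwise (hmn : 2*m+2 ≤ n) {I : Finset (ZMod n)}
    (hind : IsIndep (cyclePow n m) (I : Set (ZMod n))) :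
    ∀ (tl : List ℕ) (x : ℕ), (x :: tl).Pairwise (· < ·) →
      (∀ z ∈ x :: tl, ∃ u ∈ I, u.val = z) →
      List.Chain (fun a b => a + m + 1 ≤ b) x tl := by
  intro tl
  induction tl with
  | nil => intro x _ _; exact List.Chain.nil
  | cons y r ih =>
    intro x hpw hmem
    rw [List.pairwise_cons] at hpw
    have hxy : x < y := hpw.1 y (by simp)
    obtain ⟨u, hu, hval⟩ := hmem x (by simp)
    obtain ⟨u', hu', hval'⟩ := hmem y (by simp)
    have hgap := (indep_gap hmn hind hu hu' (by omega)).1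
    refine List.Chain.cons (by omega) ?_
    exact ih y hpw.2 (fun z hz => hmem z (by simp at hz ⊢; tauto))

lemma getLastD_map_sub : ∀ (tl : List ℕ) (x x₀ : ℕ),
    (tl.map (fun z => z - x₀)).getLastD (x - x₀) = tl.getLastD x - x₀ := by
  intro tl
  induction tl with
  | nil => intro x x₀; simp
  | cons y r ih =>
    intro x x₀
    simp only [List.map_cons, List.getLastD_cons]
    exact ih y x₀

lemma chain_map_sub : ∀ (tl : List ℕ) (x x₀ : ℕ), x₀ ≤ x →
    List.Chain (fun a b => a + m + 1 ≤ b) x tl →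
    List.Chain (fun a b => a + m + 1 ≤ b) (x - x₀) (tl.map (fun z => z - x₀)) := by
  intro tl
  induction tl with
  | nil => intro x x₀ _ _; exact List.Chain.nil
  | cons y r ih =>
    intro x x₀ hx hch
    rw [List.Chain, List.chain_cons] at hch
    refine List.Chain.cons ?_ (ih y x₀ (by omega) hch.2)
    show x - x₀ + m + 1 ≤ y - x₀
    omega
end
section
variable {n m : ℕ} [NeZero n]

lemma chain_le_of_mem : ∀ (tl : List ℕ) (x : ℕ),
    List.Chain (fun a b => a + m + 1 ≤ b) x tl → ∀ z ∈ tl, x ≤ z := by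
  intro tl
  induction tl with
  | nil => intro x _ z hz; simp at hz
  | cons y r ih =>
    intro x hch z hz
    rw [List.Chain, List.chain_cons] at hch
    rcases List.mem_cons.1 hz with rfl | hz
    · omega
    · have := ih y hch.2 z hz
      omega

lemma exists_construct_ge2 (hm : 1 ≤ m) (hmn : 2*m+2 ≤ n) {I : Finset (ZMod n)}
    (hind : IsIndep (cyclePow n m) (I : Set (ZMod n))) (h2 : 2 ≤ I.card) :
    ∃ S : List (ZMod n), legalR m ∅ S ∧ covR m ∅ S = Finset.univ ∧
      footsR m ∅ S = I ∧ S.length + I.card * m = n := by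
  classical
  have hlen : (Finset.sort (I.image ZMod.val) (· ≤ ·)).length = I.card := by
    rw [Finset.length_sort, Finset.card_image_of_injective _ (ZMod.val_injective n)]
  have hsne : Finset.sort (I.image ZMod.val) (· ≤ ·) ≠ [] := by
    intro h
    rw [h] at hlen
    simp at hlen
    omega
  obtain ⟨x₀, tl, hsj⟩ := List.exists_cons_of_ne_nil hsne
  have hlen' : tl.length + 1 = I.card := by
    rw [← hlen, hsj]
    simp
  have htl : tl ≠ [] := by
    intro h
    rw [h] at hlen'
    simp at hlen'
    omega
  have hpw : (x₀ :: tl).Pairwise (· < ·) := by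
    rw [← hsj]
    exact (Finset.sortedLT_sort _).pairwise
  have hmemJ : ∀ z ∈ x₀ :: tl, ∃ u ∈ I, u.val = z := by
    intro z hz
    rw [← hsj, Finset.mem_sort] at hz
    obtain ⟨u, hu, hz⟩ := Finset.mem_image.1 hz
    exact ⟨u, hu, hz⟩
  have hch : List.Chain (fun a b => a + m + 1 ≤ b) x₀ tl :=
    chain_of_pairwise hmn hind tl x₀ hpw hmemJ
  have hch0 : List.Chain (fun a b => a + m + 1 ≤ b) 0 (tl.map (fun z => z - x₀)) := by
    have := chain_map_sub tl x₀ x₀ (le_refl _) hch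
    simpa using this
  have hosne : tl.map (fun z => z - x₀) ≠ [] := by simpa using htl
  have hgl : (tl.map (fun z => z - x₀)).getLastD 0 = tl.getLastD x₀ - x₀ := by
    have := getLastD_map_sub tl x₀ x₀
    simpa using this
  -- the largest element
  have hmaxmem : tl.getLastD x₀ ∈ x₀ :: tl := by
    rw [← getLast_cons_eq_getLastD]
    exact List.getLast_mem _
  have hxm : x₀ + m + 1 ≤ tl.getLastD x₀ := by
    rcases tl with _ | ⟨y, r⟩
    · exact absurd rfl htl
    · rw [List.Chain, List.chain_cons] at hch
      have := chain_le_getLastD r y hch.2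
      simp only [List.getLastD_cons]
      omega
  have hwrap : tl.getLastD x₀ + m + 1 ≤ x₀ + n := by
    obtain ⟨u, hu, hval⟩ := hmemJ x₀ (by simp)
    obtain ⟨u', hu', hval'⟩ := hmemJ (tl.getLastD x₀) hmaxmem
    have := (indep_gap hmn hind hu hu' (by omega)).2
    omega
  obtain ⟨S, hSl, hSc, hSf, hSlen⟩ := construct_many hm hmn ((x₀ : ℕ) : ZMod n)
    (tl.map (fun z => z - x₀)) hosne hch0 (by omega)
  refine ⟨S, hSl, hSc, ?_, ?_⟩
  · rw [hSf]
    have hlmap : (0 :: tl.map (fun z => z - x₀)).map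
          (fun z => ((x₀:ℕ) : ZMod n) + ((z:ℕ):ZMod n))
        = (x₀ :: tl).map (fun z => ((z:ℕ) : ZMod n)) := by
      rw [List.map_cons, List.map_cons, List.map_map]
      refine congrArg₂ _ (by simp) ?_
      apply List.map_congr_left
      intro z hz
      have hzx : x₀ ≤ z := by
        have := chain_le_of_mem tl x₀ hch z hz
        omega
      simp only [Function.comp_apply]
      rw [Nat.cast_sub hzx]
      ring
    rw [hlmap]
    ext u
    rw [List.mem_toFinset, List.mem_map]
    constructor
    · rintro ⟨z, hz, rfl⟩
      obtain ⟨u', hu', hval⟩ := hmemJ z hz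
      have he : ((z:ℕ):ZMod n) = u' := by rw [← hval, ZMod.natCast_val, ZMod.cast_id]
      rw [he]
      exact hu'
    · intro hu
      refine ⟨u.val, ?_, by rw [ZMod.natCast_val, ZMod.cast_id]⟩
      rw [← hsj, Finset.mem_sort]
      exact Finset.mem_image_of_mem _ hu
  · have hlm : (List.map (fun z => z - x₀) tl).length + 1 = I.card := by
      simpa using hlen'
    rw [← hlm]
    exact hSlen
end

/-- for a nonempty independent set `I` of `C_n^m` (with `2(m+1) ≤ n`),
`γ_gr(C_n^m, I) = n - |I|·m` if `|I| ≥ 2` and `γ_gr(C_n^m, I) = n - 2m` if `|I| = 1`. -/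
theorem stmt6 (n m : ℕ) (hm : 1 ≤ m) (hn : 2 * (m + 1) ≤ n)
    (I : Finset (ZMod n)) (hne : I.Nonempty) (hind : IsIndep (cyclePow n m) ↑I) :
    (2 ≤ I.card → (gammaGrOn (cyclePow n m) ↑I : ℤ) = (n : ℤ) - I.card * m) ∧
    (I.card = 1 → (gammaGrOn (cyclePow n m) ↑I : ℤ) = (n : ℤ) - 2 * m) := by
  haveI : NeZero n := ⟨by omega⟩
  have hmn : 2*m+2 ≤ n := by omega
  have hmn1 : 2*m+1 ≤ n := by omega
  set P := {k | ∃ S : List (ZMod n), IsLegal (cyclePow n m) S ∧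
      selfFoot (cyclePow n m) S = ↑I ∧ S.length = k} with hPdef
  have hgam : gammaGrOn (cyclePow n m) ↑I = sSup P := rfl
  have hPiff : ∀ k, k ∈ P ↔ ∃ S : List (ZMod n), legalR m ∅ S ∧
      covR m ∅ S = Finset.univ ∧ footsR m ∅ S = I ∧ S.length = k := by
    intro k
    constructor
    · rintro ⟨S, hS, hfoot, rfl⟩
      obtain ⟨h1, h2⟩ := (isLegal_iff hmn1 S).1 hS
      refine ⟨S, h1, h2, ?_, rfl⟩
      apply Finset.coe_injective
      rw [← selfFoot_eq hmn1 S, hfoot]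
    · rintro ⟨S, h1, h2, hfoot, rfl⟩
      refine ⟨S, (isLegal_iff hmn1 S).2 ⟨h1, h2⟩, ?_, rfl⟩
      rw [selfFoot_eq hmn1 S, hfoot]
  have hbdd : BddAbove P := by
    refine ⟨n, fun k hk => ?_⟩
    obtain ⟨S, hS, _, rfl⟩ := hk
    exact le_trans (List.Nodup.length_le_card hS.nodup) (le_of_eq (ZMod.card n))
  constructor
  · intro h2
    obtain ⟨S0, hl0, hc0, hf0, hlen0⟩ := exists_construct_ge2 hm hmn hind h2
    have htm : I.card * m ≤ n := by omega
    have hmem : (n - I.card * m) ∈ P := (hPiff _).2 ⟨S0, hl0, hc0, hf0, by omega⟩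
    have hub : ∀ k ∈ P, k ≤ n - I.card * m := by
      intro k hk
      obtain ⟨S, hS1, hS2, hfoot, rfl⟩ := (hPiff k).1 hk
      have hbound := upper_bound_length hm hmn hS1 hS2
      rw [hfoot] at hbound
      have hbound' : (S.length : ℤ) + ((I.card * m : ℕ) : ℤ) ≤ (n:ℤ) := by
        push_cast at hbound ⊢
        linarith
      omega
    have heq : gammaGrOn (cyclePow n m) ↑I = n - I.card * m := by
      rw [hgam]
      exact le_antisymm (csSup_le ⟨_, hmem⟩ hub) (le_csSup hbdd hmem)
    rw [heq, Nat.cast_sub htm]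
    push_cast
    ring
  · intro h1
    obtain ⟨w, hw⟩ := Finset.card_eq_one.1 h1
    obtain ⟨S0, hl0, hc0, hf0, hlen0⟩ := construct_one hm hmn w
    have hmem : (n - 2*m) ∈ P := (hPiff _).2 ⟨S0, hl0, hc0, by rw [hf0, hw], hlen0⟩
    have hub : ∀ k ∈ P, k ≤ n - 2*m := by
      intro k hk
      obtain ⟨S, hS1, hS2, hfoot, rfl⟩ := (hPiff k).1 hk
      have hbound := upper_bound_one hm hmn hS1 hS2 (by rw [hfoot, h1])
      omega
    have heq : gammaGrOn (cyclePow n m) ↑I = n - 2*m := by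
      rw [hgam]
      exact le_antisymm (csSup_le ⟨_, hmem⟩ hub) (le_csSup hbdd hmem)
    rw [heq, Nat.cast_sub (by omega : 2*m ≤ n)]
    push_cast
    ring
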